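/- Let (Ω, 𝔉, P) be a probability space and, for each n ≥ 1, let ℓ_n : ℝ^d × Ω → ℝ be measurable in ω. Let θ* ∈ ℝ^d and ε > 0 be such that, for every n ≥ 1 and P-almost every ω, the map θ ↦ ℓ_n(θ, ω) is twice continuously differentiable on the open ball B(θ*, ε). Let (θ̂_n)_{n≥1} be a sequence of ℝ^d-valued random vectors converging in probability to θ*. Assume: (a) √n · ∇_θ ℓ_n(θ̂_n) → 0 in probability; (b) sup_{θ ∈ B(θ*, ε)} ‖∇²_θ ℓ_n(θ) − H(θ)‖ → 0 in probability, for some (deterministic) matrix-valued function H : B(θ*, ε) → ℝ^{d×d} which is continuous at θ* and such that H(θ*) is invertible; (c) the sequence of random vectors √n · ∇_θ ℓ_n(θ*) is bounded in probability (tight). Then √n·(θ̂_n − θ*) + H(θ*)⁻¹ · √n · ∇_θ ℓ_n(θ*) → 0 in probability as n → ∞. -/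

import Mathlib

open MeasureTheory Filter

set_option maxHeartbeats 1000000


lemma gradient_hasFDerivAt {d : ℕ} {f : EuclideanSpace ℝ (Fin d) → ℝ}
    {x : EuclideanSpace ℝ (Fin d)} (hf : ContDiffAt ℝ 2 f x) :
    HasFDerivAt (gradient f) (fderiv ℝ (gradient f) x) x := by
  have h1 : ContDiffAt ℝ 1 (fderiv ℝ f) x := hf.fderiv_right (by norm_num)
  have h2 : DifferentiableAt ℝ (fderiv ℝ f) x := h1.differentiableAt one_ne_zero
  have h3 : DifferentiableAt ℝ (gradient f) x := by
    have : gradient f = fun y =>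
        (InnerProductSpace.toDual ℝ (EuclideanSpace ℝ (Fin d))).symm (fderiv ℝ f y) := rfl
    rw [this]
    exact ((InnerProductSpace.toDual ℝ (EuclideanSpace ℝ (Fin d))).symm.differentiable.differentiableAt).comp x h2
  exact h3.hasFDerivAt

lemma key_det {d : ℕ} {f : EuclideanSpace ℝ (Fin d) → ℝ}
    {θs θh : EuclideanSpace ℝ (Fin d)} {ε r σ C s δ : ℝ}
    {A : EuclideanSpace ℝ (Fin d) →L[ℝ] EuclideanSpace ℝ (Fin d)} (hA : IsUnit A)
    (hf : ContDiffOn ℝ 2 f (Metric.ball θs ε))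
    (hr0 : 0 < r) (hrε : r ≤ ε)
    (hθ : ‖θh - θs‖ < r)
    (hD : ∀ θ ∈ Metric.ball θs r, ‖fderiv ℝ (gradient f) θ - A‖ ≤ 2*σ)
    (hs : 0 ≤ s)
    (hg : s * ‖gradient f θh‖ ≤ σ)
    (hgs : s * ‖gradient f θs‖ ≤ C)
    (hσ0 : 0 ≤ σ)
    (h1 : 2*σ*‖(Ring.inverse A : EuclideanSpace ℝ (Fin d) →L[ℝ] EuclideanSpace ℝ (Fin d))‖ ≤ 1/2)
    (h2 : ‖(Ring.inverse A : EuclideanSpace ℝ (Fin d) →L[ℝ] EuclideanSpace ℝ (Fin d))‖*σ +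
      2*σ*‖(Ring.inverse A : EuclideanSpace ℝ (Fin d) →L[ℝ] EuclideanSpace ℝ (Fin d))‖*
        (2*‖(Ring.inverse A : EuclideanSpace ℝ (Fin d) →L[ℝ] EuclideanSpace ℝ (Fin d))‖*(σ + C)) ≤ δ) :
    ‖s • (θh - θs) + (Ring.inverse A) (s • gradient f θs)‖ ≤ δ := by
  set K := ‖(Ring.inverse A : EuclideanSpace ℝ (Fin d) →L[ℝ] EuclideanSpace ℝ (Fin d))‖ with hK
  have hK0 : 0 ≤ K := norm_nonneg _
  have hball : Metric.ball θs r ⊆ Metric.ball θs ε := Metric.ball_subset_ball hrε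
  have hRA : ∀ w : EuclideanSpace ℝ (Fin d), (Ring.inverse A) (A w) = w := by
    intro w
    have h : (Ring.inverse A * A) = (1 : EuclideanSpace ℝ (Fin d) →L[ℝ] EuclideanSpace ℝ (Fin d)) := Ring.inverse_mul_cancel _ hA
    calc (Ring.inverse A) (A w) = (Ring.inverse A * A) w := rfl
      _ = w := by rw [h]; rfl
  -- mean value inequality
  have hderiv : ∀ θ ∈ Metric.ball θs r,
      HasFDerivWithinAt (gradient f) (fderiv ℝ (gradient f) θ) (Metric.ball θs r) θ := by
    intro θ hθ'
    have : ContDiffAt ℝ 2 f θ :=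
      hf.contDiffAt (Metric.isOpen_ball.mem_nhds (hball hθ'))
    exact (gradient_hasFDerivAt this).hasFDerivWithinAt
  have hθsmem : θs ∈ Metric.ball θs r := Metric.mem_ball_self hr0
  have hθhmem : θh ∈ Metric.ball θs r := by
    rw [Metric.mem_ball, dist_eq_norm]; exact hθ
  have mvi : ‖gradient f θh - gradient f θs - A (θh - θs)‖ ≤ 2*σ * ‖θh - θs‖ :=
    (convex_ball θs r).norm_image_sub_le_of_norm_hasFDerivWithin_le' hderiv hD hθsmem hθhmem
  set v := θh - θs with hv
  set X := s * ‖v‖ with hX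
  have hX0 : 0 ≤ X := mul_nonneg hs (norm_nonneg _)
  have e1 : ‖s • gradient f θh - s • gradient f θs - A (s • v)‖ ≤ 2*σ*X := by
    have : s • gradient f θh - s • gradient f θs - A (s • v)
        = s • (gradient f θh - gradient f θs - A v) := by
      rw [_root_.map_smul]; module
    rw [this, norm_smul, Real.norm_eq_abs, abs_of_nonneg hs]
    calc s * ‖gradient f θh - gradient f θs - A v‖ ≤ s * (2*σ*‖v‖) := by
          exact mul_le_mul_of_nonneg_left mvi hs
      _ = 2*σ*X := by ring
  have hAv : ‖A (s • v)‖ ≤ σ + C + 2*σ*X := by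
    have : A (s • v) = (s • gradient f θh) - (s • gradient f θs)
        - (s • gradient f θh - s • gradient f θs - A (s • v)) := by abel
    rw [this]
    have h3 := norm_sub_le ((s • gradient f θh) - (s • gradient f θs))
      (s • gradient f θh - s • gradient f θs - A (s • v))
    have h4 := norm_sub_le (s • gradient f θh) (s • gradient f θs)
    rw [norm_smul, norm_smul, Real.norm_eq_abs, abs_of_nonneg hs] at h4
    linarith
  have hXle : X ≤ K * (σ + C + 2*σ*X) := by
    have hXeq : X = ‖(Ring.inverse A) (A (s • v))‖ := by
      rw [hRA, norm_smul, Real.norm_eq_abs, abs_of_nonneg hs]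
    calc X = ‖(Ring.inverse A) (A (s • v))‖ := hXeq
      _ ≤ K * ‖A (s • v)‖ := ContinuousLinearMap.le_opNorm _ _
      _ ≤ K * (σ + C + 2*σ*X) := mul_le_mul_of_nonneg_left hAv hK0
  have hXbound : X ≤ 2*K*(σ+C) := by nlinarith
  have hfinal : s • v + (Ring.inverse A) (s • gradient f θs)
      = (Ring.inverse A) (A (s • v) + s • gradient f θs) := by
    rw [map_add, hRA]
  rw [hfinal]
  have h5 : ‖A (s • v) + s • gradient f θs‖ ≤ σ + 2*σ*X := by
    have : A (s • v) + s • gradient f θs = (s • gradient f θh)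
        - (s • gradient f θh - s • gradient f θs - A (s • v)) := by abel
    rw [this]
    have h6 := norm_sub_le (s • gradient f θh)
      (s • gradient f θh - s • gradient f θs - A (s • v))
    rw [norm_smul, Real.norm_eq_abs, abs_of_nonneg hs] at h6
    linarith
  calc ‖(Ring.inverse A) (A (s • v) + s • gradient f θs)‖
      ≤ K * ‖A (s • v) + s • gradient f θs‖ := ContinuousLinearMap.le_opNorm _ _
    _ ≤ K * (σ + 2*σ*X) := mul_le_mul_of_nonneg_left h5 hK0
    _ ≤ K*σ + 2*σ*K*(2*K*(σ+C)) := by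
        nlinarith [mul_le_mul_of_nonneg_left hXbound
          (mul_nonneg (mul_nonneg (by norm_num : (0:ℝ) ≤ 2) hσ0) hK0)]
    _ ≤ δ := h2

/-- An asymptotic linearisation lemma for Z-estimators.
`L n θ ω` is the objective `ℓ_n(θ, ω)`, twice continuously differentiable in `θ` on the
ball `B(θs, ε)` for a.e. `ω`; `θhat n` converges in probability to `θs`;
(a) `√n ∇ℓ_n(θ̂_n) → 0` in probability; (b) the Hessian of `ℓ_n` converges to a
deterministic continuous function `H`, uniformly on `B(θs, ε)`, in probability, with
`H θs` invertible; (c) `√n ∇ℓ_n(θs)` is bounded in probability.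
Then `√n (θ̂_n - θs) + H(θs)⁻¹ (√n ∇ℓ_n(θs)) → 0` in probability.
(Gradients are `gradient`, Hessians are `fderiv` of the gradient, viewed as continuous
linear endomorphisms of `ℝ^d`; the event "the sup over the ball exceeds `δ`" is encoded
as "`∃ θ` in the ball where the norm exceeds `δ`".) -/
theorem stmt5
    {Ω : Type*} [MeasurableSpace Ω] (P : Measure Ω) [IsProbabilityMeasure P]
    {d : ℕ}
    (L : ℕ → EuclideanSpace ℝ (Fin d) → Ω → ℝ)
    (hLmeas : ∀ n θ, Measurable (fun ω => L n θ ω))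
    (θs : EuclideanSpace ℝ (Fin d)) (ε : ℝ) (hε : 0 < ε)
    (hC2 : ∀ n, ∀ᵐ ω ∂P, ContDiffOn ℝ 2 (fun θ => L n θ ω) (Metric.ball θs ε))
    (θhat : ℕ → Ω → EuclideanSpace ℝ (Fin d))
    (hcons : ∀ δ > (0 : ℝ), Tendsto (fun n => P {ω | δ < ‖θhat n ω - θs‖})
      atTop (nhds 0))
    (ha : ∀ δ > (0 : ℝ), Tendsto (fun (n : ℕ) => P {ω | δ <
        Real.sqrt n * ‖gradient (fun θ => L n θ ω) (θhat n ω)‖}) atTop (nhds 0))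
    (H : EuclideanSpace ℝ (Fin d) →
      (EuclideanSpace ℝ (Fin d) →L[ℝ] EuclideanSpace ℝ (Fin d)))
    (hHcont : ContinuousAt H θs)
    (hHinv : IsUnit (H θs))
    (hb : ∀ δ > (0 : ℝ), Tendsto (fun (n : ℕ) => P {ω | ∃ θ ∈ Metric.ball θs ε,
        δ < ‖fderiv ℝ (fun θ' => gradient (fun θ'' => L n θ'' ω) θ') θ - H θ‖})
      atTop (nhds 0))
    (hc : ∀ η > (0 : ℝ), ∃ C > (0 : ℝ), ∀ n : ℕ,
      P {ω | C < Real.sqrt n * ‖gradient (fun θ => L n θ ω) θs‖} ≤ ENNReal.ofReal η) :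
    ∀ δ > (0 : ℝ), Tendsto (fun (n : ℕ) => P {ω | δ <
        ‖Real.sqrt n • (θhat n ω - θs) +
          (Ring.inverse (H θs)) (Real.sqrt n • gradient (fun θ => L n θ ω) θs)‖})
      atTop (nhds 0) := by
  intro δ hδ
  rw [ENNReal.tendsto_nhds_zero]
  intro ε' hε'
  set e : ENNReal := min ε' 1 with he
  have he0 : 0 < e := lt_min hε' one_pos
  have heT : e ≠ ⊤ := ne_top_of_le_ne_top ENNReal.one_ne_top (min_le_right _ _)
  have he5ne : e/5 ≠ 0 := by
    simp only [ne_eq, ENNReal.div_eq_zero_iff]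
    push_neg
    exact ⟨he0.ne', by norm_num⟩
  have he5T : e/5 ≠ ⊤ := by
    exact (ENNReal.div_lt_top heT (by norm_num)).ne
  have he5pos : 0 < e/5 := pos_iff_ne_zero.mpr he5ne
  set η : ℝ := (e/5).toReal with hηdef
  have hη : 0 < η := ENNReal.toReal_pos he5ne he5T
  have hofη : ENNReal.ofReal η = e/5 := ENNReal.ofReal_toReal he5T
  obtain ⟨C, hC0, hCb⟩ := hc η hη
  set K : ℝ := ‖(Ring.inverse (H θs) : EuclideanSpace ℝ (Fin d) →L[ℝ] EuclideanSpace ℝ (Fin d))‖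
    with hKdef
  have hK0 : 0 ≤ K := norm_nonneg _
  set M : ℝ := K + 1 with hMdef
  have hM1 : 1 ≤ M := by simp [hMdef]; linarith
  have hM0 : 0 < M := by linarith
  have hKM : K ≤ M := by linarith
  set σ : ℝ := min (1/(4*M)) (min (δ/(2*M)) (δ/(8*M^2*(C+1)))) with hσdef
  have hσ0 : 0 < σ := by
    refine lt_min (by positivity) (lt_min (by positivity) (by positivity))
  have hσa : σ ≤ 1/(4*M) := min_le_left _ _
  have hσb : σ ≤ δ/(2*M) := le_trans (min_le_right _ _) (min_le_left _ _)
  have hσc : σ ≤ δ/(8*M^2*(C+1)) := le_trans (min_le_right _ _) (min_le_right _ _)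
  have hσ1 : σ ≤ 1 := by
    have : 1/(4*M) ≤ 1 := by
      rw [div_le_one (by positivity)]; linarith
    linarith
  have h1 : 2*σ*K ≤ 1/2 := by
    have h1a : 2*σ*K ≤ 2*σ*M := by nlinarith
    have h1b : 2*σ*M ≤ 2*(1/(4*M))*M := by nlinarith
    have h1c : 2*(1/(4*M))*M = 1/2 := by field_simp; ring
    linarith
  have h2 : K*σ + 2*σ*K*(2*K*(σ+C)) ≤ δ := by
    have s1 : K*σ ≤ δ/2 := by
      have : M*σ ≤ M*(δ/(2*M)) := mul_le_mul_of_nonneg_left hσb hM0.le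
      have hMe : M*(δ/(2*M)) = δ/2 := by field_simp
      nlinarith
    have s2 : 2*σ*K*(2*K*(σ+C)) ≤ δ/2 := by
      have hK2 : K^2 ≤ M^2 := by nlinarith
      have hσC : σ*(σ+C) ≤ σ*(C+1) := by nlinarith
      have hσC2 : σ*(C+1) ≤ (δ/(8*M^2*(C+1)))*(C+1) :=
        mul_le_mul_of_nonneg_right hσc (by linarith)
      calc 2*σ*K*(2*K*(σ+C)) = 4*(K^2)*(σ*(σ+C)) := by ring
        _ ≤ 4*(M^2)*(σ*(C+1)) :=
            mul_le_mul (by nlinarith) hσC (by nlinarith) (by nlinarith)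
        _ ≤ 4*(M^2)*((δ/(8*M^2*(C+1)))*(C+1)) :=
            mul_le_mul_of_nonneg_left hσC2 (by nlinarith)
        _ = δ/2 := by field_simp; ring
    linarith
  -- continuity radius
  obtain ⟨r₀, hr₀, hr⟩ := Metric.continuousAt_iff.mp hHcont σ hσ0
  set r : ℝ := min r₀ ε with hrdef
  have hrpos : 0 < r := lt_min hr₀ hε
  have hrε : r ≤ ε := min_le_right _ _
  have E1ev := (ENNReal.tendsto_nhds_zero.mp (hcons (r/2) (by positivity))) (e/5) he5pos
  have E2ev := (ENNReal.tendsto_nhds_zero.mp (ha σ hσ0)) (e/5) he5pos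
  have E3ev := (ENNReal.tendsto_nhds_zero.mp (hb σ hσ0)) (e/5) he5pos
  filter_upwards [E1ev, E2ev, E3ev] with n h1n h2n h3n
  set E1 : Set Ω := {ω | r/2 < ‖θhat n ω - θs‖} with hE1
  set E2 : Set Ω := {ω | σ < Real.sqrt n * ‖gradient (fun θ => L n θ ω) (θhat n ω)‖} with hE2
  set E3 : Set Ω := {ω | ∃ θ ∈ Metric.ball θs ε,
    σ < ‖fderiv ℝ (fun θ' => gradient (fun θ'' => L n θ'' ω) θ') θ - H θ‖} with hE3
  set E4 : Set Ω := {ω | C < Real.sqrt n * ‖gradient (fun θ => L n θ ω) θs‖} with hE4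
  set N : Set Ω := {ω | ¬ ContDiffOn ℝ 2 (fun θ => L n θ ω) (Metric.ball θs ε)} with hN
  have hPN : P N = 0 := ae_iff.mp (hC2 n)
  have hsub : {ω | δ < ‖Real.sqrt n • (θhat n ω - θs) +
      (Ring.inverse (H θs)) (Real.sqrt n • gradient (fun θ => L n θ ω) θs)‖}
      ⊆ E1 ∪ (E2 ∪ (E3 ∪ (E4 ∪ N))) := by
    intro ω hω
    by_contra hnot
    simp only [Set.mem_union, Set.mem_setOf_eq, not_or, not_lt, not_exists, not_not,
      hE1, hE2, hE3, hE4, hN] at hnot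
    obtain ⟨hn1, hn2, hn3, hn4, hn5⟩ := hnot
    have hn3' : ∀ θ ∈ Metric.ball θs ε,
        ‖fderiv ℝ (fun θ' => gradient (fun θ'' => L n θ'' ω) θ') θ - H θ‖ ≤ σ := by
      intro θ hθ
      have := hn3 θ
      push_neg at this
      exact this hθ
    have hθclose : ‖θhat n ω - θs‖ < r := lt_of_le_of_lt hn1 (by linarith)
    have hD : ∀ θ ∈ Metric.ball θs r,
        ‖fderiv ℝ (gradient (fun θ'' => L n θ'' ω)) θ - H θs‖ ≤ 2*σ := by
      intro θ hθ
      have hθε : θ ∈ Metric.ball θs ε := Metric.ball_subset_ball hrε hθ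
      have t1 : ‖fderiv ℝ (fun θ' => gradient (fun θ'' => L n θ'' ω) θ') θ - H θ‖ ≤ σ :=
        hn3' θ hθε
      have hθr₀ : dist θ θs < r₀ := lt_of_lt_of_le (Metric.mem_ball.mp hθ) (min_le_left _ _)
      have t2 : ‖H θ - H θs‖ < σ := by
        have := hr hθr₀
        rwa [dist_eq_norm] at this
      have tri : ‖fderiv ℝ (fun θ' => gradient (fun θ'' => L n θ'' ω) θ') θ - H θs‖
          ≤ ‖fderiv ℝ (fun θ' => gradient (fun θ'' => L n θ'' ω) θ') θ - H θ‖
            + ‖H θ - H θs‖ := norm_sub_le_norm_sub_add_norm_sub _ _ _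
      calc ‖fderiv ℝ (gradient (fun θ'' => L n θ'' ω)) θ - H θs‖
          = ‖fderiv ℝ (fun θ' => gradient (fun θ'' => L n θ'' ω) θ') θ - H θs‖ := rfl
        _ ≤ _ := tri
        _ ≤ 2*σ := by linarith
    have hkey := key_det (f := fun θ => L n θ ω) (θs := θs) (θh := θhat n ω)
      (ε := ε) (r := r) (σ := σ) (C := C) (s := Real.sqrt n) (δ := δ) (A := H θs)
      hHinv hn5 hrpos hrε hθclose hD (Real.sqrt_nonneg _) hn2 hn4 hσ0.le h1 h2
    exact absurd hω (not_lt.2 hkey)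
  calc P {ω | δ < ‖Real.sqrt n • (θhat n ω - θs) +
        (Ring.inverse (H θs)) (Real.sqrt n • gradient (fun θ => L n θ ω) θs)‖}
      ≤ P (E1 ∪ (E2 ∪ (E3 ∪ (E4 ∪ N)))) := measure_mono hsub
    _ ≤ P E1 + (P E2 + (P E3 + (P E4 + P N))) := by
        refine le_trans (measure_union_le _ _) (add_le_add le_rfl ?_)
        refine le_trans (measure_union_le _ _) (add_le_add le_rfl ?_)
        refine le_trans (measure_union_le _ _) (add_le_add le_rfl ?_)
        exact measure_union_le _ _
    _ ≤ e/5 + (e/5 + (e/5 + (e/5 + 0))) := by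
        gcongr
        · rw [← hofη]; exact hCb n
        · exact hPN.le
    _ = 4 * (e/5) := by ring
    _ ≤ 5 * (e/5) := by gcongr <;> norm_num
    _ = e := ENNReal.mul_div_cancel' (by norm_num) (by norm_num)
    _ ≤ ε' := min_le_left _ _
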